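/- Let P₁ ∈ C^{n₁×n₂} and P₂ ∈ C^{n₂×n₃}, let Δ₁, Δ₂, Δ₃ be partitions of ⟨n₁⟩, ⟨n₂⟩, ⟨n₃⟩ respectively. If P₁ is [Δ₁]-stable on Δ₂ and P₂ is [Δ₂]-stable on Δ₃, then P₁P₂ is [Δ₁]-stable on Δ₃. -/
import Mathlib

/-- `P` is `[Δ]`-stable on `Sg`: for every block `K ∈ Δ` and `L ∈ Sg`, the submatrix
`P_K^L` is generalized stochastic, i.e. its row sums `∑_{j∈L} P i j` agree for `i ∈ K`. -/
def IsStableOn {m n : ℕ} (P : Matrix (Fin m) (Fin n) ℂ)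
    (Δ : Finpartition (Finset.univ : Finset (Fin m)))
    (Sg : Finpartition (Finset.univ : Finset (Fin n))) : Prop :=
  ∀ K ∈ Δ.parts, ∀ L ∈ Sg.parts, ∀ i ∈ K, ∀ i' ∈ K,
    ∑ j ∈ L, P i j = ∑ j ∈ L, P i' j

/-- if P₁ is [Δ₁]-stable on Δ₂ and P₂ is [Δ₂]-stable on Δ₃,
then P₁P₂ is [Δ₁]-stable on Δ₃. -/
theorem mul_isStableOn {n₁ n₂ n₃ : ℕ}
    (P₁ : Matrix (Fin n₁) (Fin n₂) ℂ) (P₂ : Matrix (Fin n₂) (Fin n₃) ℂ)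
    (Δ₁ : Finpartition (Finset.univ : Finset (Fin n₁)))
    (Δ₂ : Finpartition (Finset.univ : Finset (Fin n₂)))
    (Δ₃ : Finpartition (Finset.univ : Finset (Fin n₃)))
    (h₁ : IsStableOn P₁ Δ₁ Δ₂) (h₂ : IsStableOn P₂ Δ₂ Δ₃) :
    IsStableOn (P₁ * P₂) Δ₁ Δ₃ := by
  intro K hK L hL i hi i' hi'
  have key : ∀ x : Fin n₁,
      ∑ j ∈ L, (P₁ * P₂) x j
        = ∑ M ∈ Δ₂.parts.attach,
            ∑ k ∈ (M : Finset (Fin n₂)), P₁ x k * ∑ j ∈ L, P₂ k j := by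
    intro x
    simp only [Matrix.mul_apply]
    rw [Finset.sum_comm]
    rw [Finset.sum_congr Δ₂.biUnion_parts.symm (fun _ _ => rfl),
      Finset.sum_biUnion, ← Finset.sum_attach Δ₂.parts]
    · simp [Finset.mul_sum]
    · intro a ha b hb hab
      exact Δ₂.disjoint ha hb hab
  rw [key i, key i']
  refine Finset.sum_congr rfl fun M _ => ?_
  have hM := M.2
  -- on block M, the inner sum ∑_{j∈L} P₂ k j is constant
  rcases Finset.eq_empty_or_nonempty (M : Finset (Fin n₂)) with hE | ⟨k₀, hk₀⟩
  · simp [hE]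
  have hconst : ∀ k ∈ (M : Finset (Fin n₂)), ∑ j ∈ L, P₂ k j = ∑ j ∈ L, P₂ k₀ j :=
    fun k hk => h₂ M hM L hL k hk k₀ hk₀
  calc ∑ k ∈ (M : Finset (Fin n₂)), P₁ i k * ∑ j ∈ L, P₂ k j
      = (∑ k ∈ (M : Finset (Fin n₂)), P₁ i k) * ∑ j ∈ L, P₂ k₀ j := by
        rw [Finset.sum_mul]; exact Finset.sum_congr rfl fun k hk => by rw [hconst k hk]
    _ = (∑ k ∈ (M : Finset (Fin n₂)), P₁ i' k) * ∑ j ∈ L, P₂ k₀ j := by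
        rw [h₁ K hK M hM i hi i' hi']
    _ = ∑ k ∈ (M : Finset (Fin n₂)), P₁ i' k * ∑ j ∈ L, P₂ k j := by
        rw [Finset.sum_mul]; exact Finset.sum_congr rfl fun k hk => by rw [hconst k hk]
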